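/- For any p > 1, ∫_0^1 ∫_{0}^{(1-y^p)^{1/p}} xy (1-x^p-y^p)^{-1/p} dx dy = Γ(1-1/p)Γ(1+1/p) · Γ(2/p)² / (3·Γ(1/p)·Γ(3/p)). -/

import Mathlib

open MeasureTheory Set Real

lemma real_beta (a b : ℝ) (ha : 0 < a) (hb : 0 < b) :
    ∫ x in (0:ℝ)..1, x ^ (a-1) * (1-x) ^ (b-1)
      = Real.Gamma a * Real.Gamma b / Real.Gamma (a+b) := by
  have h := Complex.Gamma_mul_Gamma_eq_betaIntegral (s := (a:ℂ)) (t := (b:ℂ))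
    (by simpa using ha) (by simpa using hb)
  have hbeta : Complex.betaIntegral (a:ℂ) (b:ℂ)
      = ((∫ x in (0:ℝ)..1, x ^ (a-1) * (1-x) ^ (b-1) : ℝ) : ℂ) := by
    rw [Complex.betaIntegral, ← intervalIntegral.integral_ofReal]
    refine intervalIntegral.integral_congr fun x hx => ?_
    rw [uIcc_of_le (by norm_num)] at hx
    rw [Complex.ofReal_mul, Complex.ofReal_cpow hx.1,
      Complex.ofReal_cpow (by linarith [hx.2] : (0:ℝ) ≤ 1 - x)]
    push_cast
    ring
  rw [hbeta, ← Complex.ofReal_add, Complex.Gamma_ofReal, Complex.Gamma_ofReal,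
    Complex.Gamma_ofReal, ← Complex.ofReal_mul, ← Complex.ofReal_mul,
    Complex.ofReal_inj] at h
  have hne : Real.Gamma (a+b) ≠ 0 := (Real.Gamma_pos_of_pos (by linarith)).ne'
  field_simp [h]
  rw [h]; ring

lemma image_rpow_Ioo {p : ℝ} (hp : 0 < p) :
    (fun t : ℝ => t ^ p) '' Ioo 0 1 = Ioo (0:ℝ) 1 := by
  ext u
  constructor
  · rintro ⟨t, ht, rfl⟩
    exact ⟨Real.rpow_pos_of_pos ht.1 p, Real.rpow_lt_one ht.1.le ht.2 hp⟩
  · intro hu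
    refine ⟨u ^ p⁻¹, ⟨Real.rpow_pos_of_pos hu.1 _, Real.rpow_lt_one hu.1.le hu.2 (by positivity)⟩, ?_⟩
    exact Real.rpow_inv_rpow hu.1.le hp.ne'

lemma subst_rpow (p a b : ℝ) (hp : 0 < p) (ha : 0 < a) (hb : 0 < b) :
    ∫ t in (0:ℝ)..1, t ^ (a-1) * (1 - t ^ p) ^ (b-1)
      = Real.Gamma (a/p) * Real.Gamma b / (p * Real.Gamma (a/p + b)) := by
  have key : ∫ u in Ioo (0:ℝ) 1, u ^ (a/p-1) * (1-u) ^ (b-1)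
      = ∫ t in Ioo (0:ℝ) 1, p * (t ^ (a-1) * (1 - t ^ p) ^ (b-1)) := by
    conv_lhs => rw [← image_rpow_Ioo hp]
    rw [integral_image_eq_integral_abs_deriv_smul measurableSet_Ioo
      (fun x hx => (Real.hasDerivAt_rpow_const (Or.inl hx.1.ne')).hasDerivWithinAt)
      ((Real.rpow_left_injOn hp.ne').mono (fun x hx => le_of_lt hx.1))
      (fun u => u ^ (a/p-1) * (1-u) ^ (b-1))]
    refine setIntegral_congr_fun measurableSet_Ioo fun t ht => ?_
    have ht0 : 0 < t := ht.1
    have h1 : (0:ℝ) < p * t ^ (p-1) := by positivity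
    have e1 : (t ^ p) ^ (a/p - 1) = t ^ (a - p) := by
      rw [← Real.rpow_mul ht0.le]
      congr 1
      field_simp
    have e2 : t ^ (p-1) * t ^ (a-p) = t ^ (a-1) := by
      rw [← Real.rpow_add ht0]
      ring_nf
    rw [smul_eq_mul, abs_of_pos h1, e1]
    linear_combination p * (1 - t ^ p) ^ (b-1) * e2
  rw [MeasureTheory.integral_const_mul] at key
  have hB := real_beta (a/p) b (by positivity) hb
  rw [intervalIntegral.integral_of_le zero_le_one, integral_Ioc_eq_integral_Ioo] at hB
  rw [intervalIntegral.integral_of_le zero_le_one, integral_Ioc_eq_integral_Ioo]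
  rw [hB] at key
  rw [eq_div_iff (by positivity : p * Real.Gamma (a/p + b) ≠ 0)]
  have hG : Real.Gamma (a/p + b) ≠ 0 := (Real.Gamma_pos_of_pos (by positivity)).ne'
  field_simp at key ⊢
  linarith [key]

/-- For p > 1,
∫_0^1 ∫_0^{(1-y^p)^{1/p}} x y (1-x^p-y^p)^{-1/p} dx dy
  = Γ(1-1/p)Γ(1+1/p)·Γ(2/p)²/(3Γ(1/p)Γ(3/p)). -/
theorem double_integral_xy (p : ℝ) (hp : 1 < p) :
    (∫ y in (0:ℝ)..1, ∫ x in (0:ℝ)..((1 - y ^ p) ^ (1/p)),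
        x * y * (1 - x ^ p - y ^ p) ^ (-(1/p))) =
      Real.Gamma (1 - 1/p) * Real.Gamma (1 + 1/p) * Real.Gamma (2/p) ^ 2 /
        (3 * Real.Gamma (1/p) * Real.Gamma (3/p)) := by
  have hp0 : (0:ℝ) < p := lt_trans one_pos hp
  have hinvp : 0 < 1/p := by positivity
  have hinvp1 : 1/p < 1 := by rw [div_lt_one hp0]; exact hp
  set I1 : ℝ := ∫ t in (0:ℝ)..1, t * (1 - t ^ p) ^ (-(1/p)) with hI1def
  have hI1 : I1 = Real.Gamma (2/p) * Real.Gamma (1-1/p) / (p * Real.Gamma (1 + 1/p)) := by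
    have h := subst_rpow p 2 (1-1/p) hp0 (by norm_num) (by linarith)
    rw [show (2:ℝ)/p + (1-1/p) = 1 + 1/p by ring] at h
    rw [hI1def, ← h]
    refine intervalIntegral.integral_congr fun t ht => ?_
    rw [show (2:ℝ)-1 = 1 by norm_num, Real.rpow_one, show (1-1/p)-1 = -(1/p) by ring]
  have hI2 : (∫ y in (0:ℝ)..1, y * (1 - y ^ p) ^ (1/p))
      = Real.Gamma (2/p) * Real.Gamma (1+1/p) / (p * Real.Gamma (1 + 3/p)) := by
    have h := subst_rpow p 2 (1+1/p) hp0 (by norm_num) (by positivity)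
    rw [show (2:ℝ)/p + (1+1/p) = 1 + 3/p by ring] at h
    rw [← h]
    refine intervalIntegral.integral_congr fun t ht => ?_
    rw [show (2:ℝ)-1 = 1 by norm_num, Real.rpow_one, show (1+1/p)-1 = 1/p by ring]
  have hinner : ∀ y ∈ Icc (0:ℝ) 1,
      (∫ x in (0:ℝ)..((1 - y ^ p) ^ (1/p)), x * y * (1 - x ^ p - y ^ p) ^ (-(1/p)))
        = y * (1 - y ^ p) ^ (1/p) * I1 := by
    intro y hy
    rcases eq_or_lt_of_le hy.2 with rfl | hy1
    · rw [show (1:ℝ) ^ p = 1 from Real.one_rpow p, sub_self,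
        Real.zero_rpow (by positivity : 1/p ≠ 0)]
      simp
    · have hyp1 : y ^ p < 1 := Real.rpow_lt_one hy.1 hy1 hp0
      have hc : 0 < 1 - y ^ p := by linarith
      set k := (1 - y ^ p) ^ (1/p) with hk
      have hk0 : 0 < k := Real.rpow_pos_of_pos hc _
      have hkp : k ^ p = 1 - y ^ p := by
        rw [hk, ← Real.rpow_mul hc.le, one_div, inv_mul_cancel₀ hp0.ne', Real.rpow_one]
      have hs := intervalIntegral.smul_integral_comp_mul_left
        (f := fun x => x * y * (1 - x ^ p - y ^ p) ^ (-(1/p))) (a := 0) (b := 1) k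
      rw [mul_zero, mul_one] at hs
      rw [← hs]
      have hcongr : (∫ t in (0:ℝ)..1, (fun x => x * y * (1 - x ^ p - y ^ p) ^ (-(1/p))) (k * t))
          = ∫ t in (0:ℝ)..1, (y * k * (1 - y ^ p) ^ (-(1/p))) * (t * (1 - t ^ p) ^ (-(1/p))) := by
        refine intervalIntegral.integral_congr fun t ht => ?_
        rw [uIcc_of_le (by norm_num)] at ht
        have ht1 : t ^ p ≤ 1 := Real.rpow_le_one ht.1 ht.2 hp0.le
        simp only
        rw [Real.mul_rpow hk0.le ht.1, hkp,
          show 1 - (1 - y ^ p) * t ^ p - y ^ p = (1 - y ^ p) * (1 - t ^ p) by ring,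
          Real.mul_rpow hc.le (by linarith)]
        ring
      rw [hcongr, intervalIntegral.integral_const_mul, ← hI1def, smul_eq_mul]
      have hkk : k * (y * k * (1 - y ^ p) ^ (-(1/p))) = y * k := by
        have e : (1 - y ^ p) ^ (1/p) * (1 - y ^ p) ^ (-(1/p)) = 1 := by
          rw [← Real.rpow_add hc]
          simp
        rw [hk]
        linear_combination y * (1 - y ^ p) ^ (1/p) * e
      rw [← mul_assoc, hkk]
  rw [intervalIntegral.integral_congr (g := fun y => y * (1 - y ^ p) ^ (1/p) * I1)
    (fun y hy => hinner y (by rwa [uIcc_of_le (by norm_num)] at hy)),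
    intervalIntegral.integral_mul_const, hI2, hI1]
  have hG1 : Real.Gamma (1 + 1/p) = (1/p) * Real.Gamma (1/p) := by
    rw [show (1:ℝ) + 1/p = 1/p + 1 by ring, Real.Gamma_add_one (by positivity)]
  have hG3 : Real.Gamma (1 + 3/p) = (3/p) * Real.Gamma (3/p) := by
    rw [show (1:ℝ) + 3/p = 3/p + 1 by ring, Real.Gamma_add_one (by positivity)]
  rw [hG1, hG3]
  have h1 : Real.Gamma (1/p) ≠ 0 := (Real.Gamma_pos_of_pos hinvp).ne'
  have h3 : Real.Gamma (3/p) ≠ 0 := (Real.Gamma_pos_of_pos (by positivity)).ne'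
  field_simp
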